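/- Let f : ℝⁿ → ℝ∪{±∞} be a subdifferentially regular function (at every point of its domain). Then the limiting slope of f admits a chain rule: for every absolutely continuous curve x : (a,b) → ℝⁿ for which f∘x is non-increasing and ∂f(x(t)) is nonempty for a.e. t, one has (f∘x)'(t) = ⟨v, ẋ(t)⟩ for every v ∈ ∂f(x(t)), for a.e. t ∈ (a,b). -/

import Mathlib

open Filter Topology MeasureTheory Set NNReal ENNReal Pointwise

/-- Convert an extended real to an extended nonnegative real (negatives map to `0`). -/
noncomputable def EReal.toENNReal' (x : EReal) : ℝ≥0∞ :=
  if x = ⊤ then ⊤ else ENNReal.ofReal x.toReal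

section MetricDefs

variable {X : Type*} [MetricSpace X]

/-- The slope `|∇f|(xc) = limsup_{x → xc, x ≠ xc} (f(xc) − f(x))⁺ / d(xc,x)`. -/
noncomputable def mSlope (f : X → EReal) (xc : X) : ℝ≥0∞ :=
  Filter.limsup (fun x => (f xc - f x).toENNReal' / edist xc x) (𝓝[≠] xc)

/-- The slope of `f` at `xc` relative to a set `S`. -/
noncomputable def mSlopeOn (f : X → EReal) (S : Set X) (xc : X) : ℝ≥0∞ :=
  Filter.limsup (fun x => (f xc - f x).toENNReal' / edist xc x) (𝓝[S \ {xc}] xc)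

/-- The limiting slope `|∇f|⁻(xc) = liminf_{x → xc, f(x) → f(xc)} |∇f|(x)`. -/
noncomputable def limSlope (f : X → EReal) (xc : X) : ℝ≥0∞ :=
  Filter.liminf (fun x => mSlope f x)
    (Filter.comap (fun x => (x, f x)) (𝓝 (xc, f xc)))

/-- `γ` has metric derivative `m` at `t`:  `lim_{s→t} d(γ(s),γ(t))/|s−t| = m`. -/
def HasMetricDerivAt (γ : ℝ → X) (t : ℝ) (m : ℝ) : Prop :=
  Tendsto (fun s => dist (γ s) (γ t) / |s - t|) (𝓝[≠] t) (𝓝 m)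

/-- `γ` is absolutely continuous on `[a,b]`. -/
def AbsContOn (γ : ℝ → X) (a b : ℝ) : Prop :=
  ∃ m : ℝ → ℝ, IntegrableOn m (Icc a b) ∧
    ∀ s t : ℝ, a ≤ s → s ≤ t → t ≤ b → dist (γ s) (γ t) ≤ ∫ τ in s..t, m τ

/-- `γ : [a,b] → X` is a near-steepest descent curve for `f`. -/
def NearSteepestDescentCurve (f : X → EReal) (a b : ℝ) (γ : ℝ → X) : Prop :=
  LipschitzOnWith 1 γ (Icc a b) ∧
  AntitoneOn (fun t => f (γ t)) (Icc a b) ∧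
  ∀ᵐ t ∂(volume.restrict (Icc a b)), ∃ d : ℝ,
    HasDerivAt (fun τ => (f (γ τ)).toReal) d t ∧
    limSlope f (γ t) ≤ ENNReal.ofReal |d|

/-- `γ : [a,b] → X` is a curve of near-maximal slope for `f`. -/
def NearMaximalSlopeCurve (f : X → EReal) (a b : ℝ) (γ : ℝ → X) : Prop :=
  AbsContOn γ a b ∧
  (∀ᵐ t ∂(volume.restrict (Icc a b)), ∃ m : ℝ,
      HasMetricDerivAt γ t m ∧ ENNReal.ofReal m = limSlope f (γ t)) ∧
  AntitoneOn (fun t => f (γ t)) (Icc a b) ∧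
  ∀ᵐ t ∂(volume.restrict (Icc a b)), ∃ d : ℝ,
    HasDerivAt (fun τ => (f (γ τ)).toReal) d t ∧
    (limSlope f (γ t)) ^ 2 ≤ ENNReal.ofReal (-d)

/-- `S` is a metric segment between `x` and `y`. -/
def IsMetricSegment (S : Set X) (x y : X) : Prop :=
  ∃ (a b : ℝ) (ω : ℝ → X), a ≤ b ∧
    (∀ s ∈ Icc a b, ∀ t ∈ Icc a b, dist (ω s) (ω t) = |s - t|) ∧
    ω '' Icc a b = S ∧ ω a = x ∧ ω b = y

/-- A subset `U` is metrically convex (in the induced metric). -/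
def IsConvexMetricSubset (U : Set X) : Prop :=
  ∀ x ∈ U, ∀ y ∈ U, x ≠ y → ∃ S ⊆ U, IsMetricSegment S x y

/-- `X` is a locally convex metric space. -/
def LocallyConvexMetricSpace (X : Type*) [MetricSpace X] : Prop :=
  ∀ x : X, ∃ U ∈ 𝓝 x, IsConvexMetricSubset U

/-- `f` is continuous on slope-bounded sets. -/
def ContinuousOnSlopeBoundedSets (f : X → EReal) : Prop :=
  ∀ xc : X, (∃ r : ℝ, f xc = (r : EReal)) →
    ∀ x : ℕ → X, Tendsto x atTop (𝓝 xc) →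
      (∃ C : ℝ≥0∞, C ≠ ⊤ ∧ ∀ i, mSlope f (x i) ≤ C) →
      (∃ C : ℝ, ∀ i, dist (x i) xc ≤ C) →
      (∃ C : ℝ, ∀ i, f (x i) ≤ (C : EReal)) →
      Tendsto (fun i => f (x i)) atTop (𝓝 (f xc))

end MetricDefs

section EuclideanDefs


variable {H : Type*} [NormedAddCommGroup H] [InnerProductSpace ℝ H]

/-- The Fréchet subdifferential `∂̂f(xc)`. -/
def frechetSubdiff (f : H → EReal) (xc : H) : Set H :=
  {v | (∃ r : ℝ, f xc = (r : EReal)) ∧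
    ∀ ε : ℝ, 0 < ε → ∀ᶠ x in 𝓝 xc,
      f xc + (((inner ℝ v (x - xc) : ℝ) - ε * ‖x - xc‖ : ℝ) : EReal) ≤ f x}

/-- The limiting subdifferential `∂f(xc)`. -/
def limitingSubdiff (f : H → EReal) (xc : H) : Set H :=
  {v | (∃ r : ℝ, f xc = (r : EReal)) ∧
    ∃ (x : ℕ → H) (w : ℕ → H), (∀ i, w i ∈ frechetSubdiff f (x i)) ∧
      Tendsto x atTop (𝓝 xc) ∧ Tendsto (fun i => f (x i)) atTop (𝓝 (f xc)) ∧
      Tendsto w atTop (𝓝 v)}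

/-- The horizon subdifferential `∂^∞ f(xc)`. -/
def horizonSubdiff (f : H → EReal) (xc : H) : Set H :=
  {v | (∃ r : ℝ, f xc = (r : EReal)) ∧
    ∃ (τ : ℕ → ℝ) (x : ℕ → H) (w : ℕ → H),
      (∀ i, 0 < τ i) ∧ Tendsto τ atTop (𝓝 0) ∧
      (∀ i, w i ∈ frechetSubdiff f (x i)) ∧
      Tendsto x atTop (𝓝 xc) ∧ Tendsto (fun i => f (x i)) atTop (𝓝 (f xc)) ∧
      Tendsto (fun i => τ i • w i) atTop (𝓝 v)}

/-- The Clarke subdifferential `∂_c f(xc) = cl conv [∂f(xc) + ∂^∞ f(xc)]`. -/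
noncomputable def clarkeSubdiff (f : H → EReal) (xc : H) : Set H :=
  closure (convexHull ℝ (limitingSubdiff f xc + horizonSubdiff f xc))

/-- The (non-convex) conical hull `{λ v : λ ≥ 0, v ∈ S}`. -/
def coneHull (S : Set H) : Set H := {w | ∃ lam : ℝ, 0 ≤ lam ∧ ∃ v ∈ S, w = lam • v}

open Classical in
/-- The extended-real-valued indicator function of a set. -/
noncomputable def erealIndicator (Q : Set H) : H → EReal := fun x => if x ∈ Q then 0 else ⊤

/-- The limiting normal cone `N_Q(xc) = ∂ δ_Q(xc)`. -/
def limitingNormalCone (Q : Set H) (xc : H) : Set H := limitingSubdiff (erealIndicator Q) xc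

/-- The Fréchet normal cone `N̂_Q(xc) = ∂̂ δ_Q(xc)`. -/
def frechetNormalCone (Q : Set H) (xc : H) : Set H := frechetSubdiff (erealIndicator Q) xc

/-- `Q` is Clarke regular at `xc`. -/
def ClarkeRegularAt (Q : Set H) (xc : H) : Prop :=
  xc ∈ Q ∧ (∃ ε : ℝ, 0 < ε ∧ IsClosed (Q ∩ Metric.closedBall xc ε)) ∧
  limitingNormalCone Q xc = frechetNormalCone Q xc

/-- `f` is subdifferentially regular at `xc`: `f(xc)` is finite and `epi f` is
Clarke regular at `(xc, f(xc))` as a subset of `H × ℝ` (with the euclidean product structure). -/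
def SubdiffRegularAt (f : H → EReal) (xc : H) : Prop :=
  (∃ r : ℝ, f xc = (r : EReal)) ∧
  ClarkeRegularAt {p : WithLp 2 (H × ℝ) | f p.ofLp.1 ≤ (p.ofLp.2 : EReal)}
    ((WithLp.equiv 2 (H × ℝ)).symm (xc, (f xc).toReal))

/-- The tangent cone `T_Q(xc)`. -/
def tangentConeAt' (Q : Set H) (xc : H) : Set H :=
  {v | ∃ (lam : ℕ → ℝ) (x : ℕ → H), (∀ i, x i ∈ Q) ∧ Tendsto lam atTop atTop ∧
    Tendsto (fun i => lam i • (x i - xc)) atTop (𝓝 v)}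

/-- The limiting slope of `f` admits a chain rule. -/
def LimitingSlopeChainRule (f : H → EReal) : Prop :=
  ∀ (a b : ℝ) (x : ℝ → H), AbsContOn x a b →
    AntitoneOn (fun t => f (x t)) (Icc a b) →
    (∀ᵐ t ∂(volume.restrict (Icc a b)), (limitingSubdiff f (x t)).Nonempty) →
    ∀ᵐ t ∂(volume.restrict (Icc a b)), ∃ (d : ℝ) (x' : H),
      HasDerivAt (fun τ => (f (x τ)).toReal) d t ∧ HasDerivAt x x' t ∧
      ∀ v ∈ limitingSubdiff f (x t), d = (inner ℝ v x' : ℝ)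

/-- `f` is locally Lipschitz continuous on its domain. -/
def LocLipschitzOnDomain (f : H → EReal) : Prop :=
  ∀ x : H, f x ≠ ⊤ → ∃ (K : ℝ≥0) (ε : ℝ), 0 < ε ∧
    (∀ y ∈ Metric.ball x ε, f y ≠ ⊤ → ∃ r : ℝ, f y = (r : EReal)) ∧
    LipschitzOnWith K (fun y => (f y).toReal) (Metric.ball x ε ∩ {y | f y ≠ ⊤})

end EuclideanDefs

section Semialgebraic

/-- A semialgebraic subset of `ℝᵐ`: a finite union of sets defined by finitely many
polynomial equalities and strict inequalities. -/
def IsSemialgebraic {m : ℕ} (S : Set (EuclideanSpace ℝ (Fin m))) : Prop :=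
  ∃ (k : ℕ) (P Q : Fin k → Finset (MvPolynomial (Fin m) ℝ)),
    S = ⋃ i : Fin k, {x | (∀ p ∈ P i, MvPolynomial.eval (fun j => x j) p = 0) ∧
                         (∀ q ∈ Q i, MvPolynomial.eval (fun j => x j) q < 0)}

/-- A semialgebraic function: one whose epigraph is semialgebraic. -/
def IsSemialgebraicFn {n : ℕ} (f : EuclideanSpace ℝ (Fin n) → EReal) : Prop :=
  IsSemialgebraic {y : EuclideanSpace ℝ (Fin (n + 1)) |
    f ((WithLp.equiv 2 _).symm (fun i : Fin n => y i.castSucc)) ≤ ((y (Fin.last n) : ℝ) : EReal)}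

end Semialgebraic
section RegLemmas
set_option linter.unusedSectionVars false

variable {H : Type*} [NormedAddCommGroup H] [InnerProductSpace ℝ H]

lemma wlp_fst_norm_le (p : WithLp 2 (H × ℝ)) : ‖p.fst‖ ≤ ‖p‖ := by
  have h := WithLp.prod_norm_sq_eq_of_L2 p
  nlinarith [norm_nonneg p, norm_nonneg p.fst, norm_nonneg p.snd, sq_nonneg ‖p.snd‖]

lemma wlp_norm_le (p : WithLp 2 (H × ℝ)) : ‖p‖ ≤ ‖p.fst‖ + ‖p.snd‖ := by
  have h := WithLp.prod_norm_sq_eq_of_L2 p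
  nlinarith [norm_nonneg p, norm_nonneg p.fst, norm_nonneg p.snd]

lemma wlp_inner_eq (w : H) (r : ℝ) (u : WithLp 2 (H × ℝ)) :
    (inner ℝ ((WithLp.equiv 2 (H × ℝ)).symm (w, r)) u : ℝ)
      = inner ℝ w u.fst + r * u.snd := by
  simp [WithLp.prod_inner_apply, RCLike.inner_apply]
  ring

theorem frechet_mem_cone (f : H → EReal) (z w : H) (ρ : ℝ) (hz : f z = (ρ : EReal))
    (hw : w ∈ frechetSubdiff f z) :
    ((WithLp.equiv 2 (H × ℝ)).symm (w, -1)) ∈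
      frechetNormalCone {p : WithLp 2 (H × ℝ) | f p.ofLp.1 ≤ (p.ofLp.2 : EReal)}
        ((WithLp.equiv 2 (H × ℝ)).symm (z, ρ)) := by
  set Q := {p : WithLp 2 (H × ℝ) | f p.ofLp.1 ≤ (p.ofLp.2 : EReal)} with hQdef
  set q := ((WithLp.equiv 2 (H × ℝ)).symm (z, ρ)) with hqdef
  have hqQ : q ∈ Q := by
    show f z ≤ ((ρ : ℝ) : EReal)
    rw [hz]
  have hindq : erealIndicator Q q = ((0 : ℝ) : EReal) := by
    simp [erealIndicator, hqQ]
  refine ⟨⟨0, hindq⟩, ?_⟩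
  intro ε hε
  have hcont : Continuous (fun p : WithLp 2 (H × ℝ) => p.fst) :=
    continuous_fst.comp (WithLp.prodContinuousLinearEquiv 2 ℝ H ℝ).continuous
  have hev2 : ∀ᶠ p in 𝓝 q,
      f z + ((((inner ℝ w (p.fst - z) : ℝ)) - ε * ‖p.fst - z‖ : ℝ) : EReal) ≤ f p.fst :=
    (hcont.tendsto q).eventually (hw.2 ε hε)
  filter_upwards [hev2] with p hp
  by_cases hpQ : p ∈ Q
  · have hindp : erealIndicator Q p = ((0 : ℝ) : EReal) := by simp [erealIndicator, hpQ]
    rw [hindq, hindp]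
    have hfp : f p.fst ≤ ((p.snd : ℝ) : EReal) := hpQ
    rw [hz] at hp
    have hple : ((ρ + ((inner ℝ w (p.fst - z) : ℝ) - ε * ‖p.fst - z‖) : ℝ) : EReal)
        ≤ ((p.snd : ℝ) : EReal) := by
      rw [EReal.coe_add]
      exact le_trans hp hfp
    have hreal : ρ + ((inner ℝ w (p.fst - z) : ℝ) - ε * ‖p.fst - z‖) ≤ p.snd :=
      EReal.coe_le_coe_iff.mp hple
    have hnorm : ‖p.fst - z‖ ≤ ‖p - q‖ := by
      have h1 : (p - q).fst = p.fst - z := by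
        rw [WithLp.sub_fst]; rfl
      calc ‖p.fst - z‖ = ‖(p - q).fst‖ := by rw [h1]
        _ ≤ ‖p - q‖ := wlp_fst_norm_le _
    have hinner : (inner ℝ ((WithLp.equiv 2 (H × ℝ)).symm (w, -1)) (p - q) : ℝ)
        = (inner ℝ w (p.fst - z) : ℝ) + (-1) * (p.snd - ρ) := by
      rw [wlp_inner_eq, WithLp.sub_fst, WithLp.sub_snd]
      rfl
    have hX : (0:ℝ) + ((inner ℝ ((WithLp.equiv 2 (H × ℝ)).symm (w, -1)) (p - q) : ℝ)
        - ε * ‖p - q‖ : ℝ) ≤ (0:ℝ) := by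
      rw [hinner]
      have hmul : ε * ‖p.fst - z‖ ≤ ε * ‖p - q‖ :=
        mul_le_mul_of_nonneg_left hnorm (le_of_lt hε)
      linarith
    exact_mod_cast hX
  · have : erealIndicator Q p = ⊤ := by simp [erealIndicator, hpQ]
    rw [this]
    exact le_top

end RegLemmas
section RegLemmas2
set_option linter.unusedSectionVars false

variable {H : Type*} [NormedAddCommGroup H] [InnerProductSpace ℝ H]

theorem limiting_to_cone (f : H → EReal) (xc : H) (ρ : ℝ) (hx : f xc = (ρ : EReal)) (v : H)
    (hv : v ∈ limitingSubdiff f xc) :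
    ((WithLp.equiv 2 (H × ℝ)).symm (v, -1)) ∈
      limitingNormalCone {p : WithLp 2 (H × ℝ) | f p.ofLp.1 ≤ (p.ofLp.2 : EReal)}
        ((WithLp.equiv 2 (H × ℝ)).symm (xc, ρ)) := by
  set Q := {p : WithLp 2 (H × ℝ) | f p.ofLp.1 ≤ (p.ofLp.2 : EReal)} with hQdef
  set q := ((WithLp.equiv 2 (H × ℝ)).symm (xc, ρ)) with hqdef
  have hqQ : q ∈ Q := by show f xc ≤ ((ρ : ℝ) : EReal); rw [hx]
  have hindq : erealIndicator Q q = ((0 : ℝ) : EReal) := by simp [erealIndicator, hqQ]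
  obtain ⟨-, x, w, hw, hxt, hft, hwt⟩ := hv
  choose r hr using fun i => (hw i).1
  set p : ℕ → WithLp 2 (H × ℝ) := fun i => (WithLp.equiv 2 (H × ℝ)).symm (x i, r i) with hpdef
  have hpQ : ∀ i, p i ∈ Q := by
    intro i
    show f (x i) ≤ ((r i : ℝ) : EReal)
    rw [hr i]
  -- r i → ρ
  have hrt : Tendsto r atTop (𝓝 ρ) := by
    have h1 : Tendsto (fun i => (f (x i)).toReal) atTop (𝓝 (((ρ : ℝ) : EReal)).toReal) := by
      refine (EReal.tendsto_toReal ?_ ?_).comp (hx ▸ hft)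
      · exact EReal.coe_ne_top ρ
      · exact EReal.coe_ne_bot ρ
    simp only [EReal.toReal_coe] at h1
    refine h1.congr fun i => ?_
    rw [hr i, EReal.toReal_coe]
  have hdist : ∀ (u : H) (s : ℝ) (u' : H) (s' : ℝ),
      dist ((WithLp.equiv 2 (H × ℝ)).symm (u, s)) ((WithLp.equiv 2 (H × ℝ)).symm (u', s'))
        ≤ dist u u' + dist s s' := by
    intro u s u' s'
    rw [dist_eq_norm, dist_eq_norm, dist_eq_norm]
    refine le_trans (wlp_norm_le _) ?_
    have h1 : ((WithLp.equiv 2 (H × ℝ)).symm (u, s) - (WithLp.equiv 2 (H × ℝ)).symm (u', s')).fst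
        = u - u' := by rw [WithLp.sub_fst]; rfl
    have h2 : ((WithLp.equiv 2 (H × ℝ)).symm (u, s) - (WithLp.equiv 2 (H × ℝ)).symm (u', s')).snd
        = s - s' := by rw [WithLp.sub_snd]; rfl
    rw [h1, h2]
  have htend : ∀ (u : ℕ → H) (s : ℕ → ℝ) (ul : H) (sl : ℝ),
      Tendsto u atTop (𝓝 ul) → Tendsto s atTop (𝓝 sl) →
      Tendsto (fun i => (WithLp.equiv 2 (H × ℝ)).symm (u i, s i)) atTop
        (𝓝 ((WithLp.equiv 2 (H × ℝ)).symm (ul, sl))) := by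
    intro u s ul sl hu hs
    rw [tendsto_iff_dist_tendsto_zero]
    refine squeeze_zero (fun i => dist_nonneg) (fun i => hdist (u i) (s i) ul sl) ?_
    have := (tendsto_iff_dist_tendsto_zero.mp hu).add (tendsto_iff_dist_tendsto_zero.mp hs)
    simpa using this
  refine ⟨⟨0, hindq⟩, p, fun i => (WithLp.equiv 2 (H × ℝ)).symm (w i, -1), ?_, ?_, ?_, ?_⟩
  · intro i
    exact frechet_mem_cone f (x i) (w i) (r i) (hr i) (hw i)
  · exact htend x r xc ρ hxt hrt
  · have h0 : Tendsto (fun _ : ℕ => ((0:ℝ) : EReal)) atTop (𝓝 (erealIndicator Q q)) := by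
      rw [hindq]; exact tendsto_const_nhds
    refine h0.congr fun i => ?_
    simp [erealIndicator, hpQ i]
  · exact htend w (fun _ => -1) v (-1) hwt tendsto_const_nhds

theorem cone_to_frechet (f : H → EReal) (hbot : ∀ y, f y ≠ ⊥) (xc : H) (ρ : ℝ)
    (hx : f xc = (ρ : EReal)) (v : H)
    (hv : ((WithLp.equiv 2 (H × ℝ)).symm (v, -1)) ∈
      frechetNormalCone {p : WithLp 2 (H × ℝ) | f p.ofLp.1 ≤ (p.ofLp.2 : EReal)}
        ((WithLp.equiv 2 (H × ℝ)).symm (xc, ρ))) :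
    v ∈ frechetSubdiff f xc := by
  set Q := {p : WithLp 2 (H × ℝ) | f p.ofLp.1 ≤ (p.ofLp.2 : EReal)} with hQdef
  set q := ((WithLp.equiv 2 (H × ℝ)).symm (xc, ρ)) with hqdef
  have hqQ : q ∈ Q := by show f xc ≤ ((ρ : ℝ) : EReal); rw [hx]
  have hindq : erealIndicator Q q = ((0 : ℝ) : EReal) := by simp [erealIndicator, hqQ]
  refine ⟨⟨ρ, hx⟩, ?_⟩
  intro ε hε
  set c : ℝ := ‖v‖ + ε + 1 with hcdef
  have hc0 : (0:ℝ) < 1 + c := by positivity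
  have hε' : (0:ℝ) < ε / (2 * (1 + c)) := by positivity
  obtain ⟨δ, hδ0, hδ⟩ := Metric.eventually_nhds_iff.mp (hv.2 (ε / (2 * (1 + c))) hε')
  rw [Metric.eventually_nhds_iff]
  refine ⟨δ / (1 + c), by positivity, ?_⟩
  intro y hy
  by_contra hcon
  push_neg at hcon
  -- f y is finite
  have hytop : f y ≠ ⊤ := by
    intro h
    rw [h] at hcon
    exact not_top_lt (lt_of_lt_of_le hcon le_top)
  set s : ℝ := (f y).toReal with hsdef
  have hys : f y = (s : EReal) := (EReal.coe_toReal hytop (hbot y)).symm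
  set A : ℝ := inner ℝ v (y - xc) with hAdef
  have hcon' : s < ρ + (A - ε * ‖y - xc‖) := by
    rw [hys, hx, ← EReal.coe_add] at hcon
    exact_mod_cast hcon
  have hAle : |A| ≤ ‖v‖ * ‖y - xc‖ := abs_real_inner_le_norm v (y - xc)
  have hyne : y ≠ xc := by
    intro h
    subst h
    have h1 : (s : EReal) = (ρ : EReal) := by rw [← hys, hx]
    have h2 : s = ρ := by exact_mod_cast h1
    have hA0 : A = 0 := by rw [hAdef]; simp
    have hn0 : ‖y - y‖ = (0:ℝ) := by simp
    rw [h2, hA0, hn0] at hcon'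
    linarith
  have hynorm : (0:ℝ) < ‖y - xc‖ := by
    rw [norm_pos_iff, sub_ne_zero]; exact hyne
  set R : ℝ := max s (ρ - c * ‖y - xc‖) with hRdef
  set P : WithLp 2 (H × ℝ) := (WithLp.equiv 2 (H × ℝ)).symm (y, R) with hPdef
  have hPQ : P ∈ Q := by
    show f y ≤ ((R : ℝ) : EReal)
    rw [hys]
    exact_mod_cast le_max_left _ _
  have hRub : R - ρ ≤ A - ε * ‖y - xc‖ := by
    rw [sub_le_iff_le_add]
    refine max_le (by linarith) ?_
    nlinarith [abs_le.mp hAle]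
  have hRabs : |R - ρ| ≤ c * ‖y - xc‖ := by
    rw [abs_le]
    constructor
    · have : ρ - c * ‖y - xc‖ ≤ R := le_max_right _ _
      linarith
    · have h1 : A ≤ ‖v‖ * ‖y - xc‖ := (abs_le.mp hAle).2
      have : R - ρ ≤ A - ε * ‖y - xc‖ := hRub
      nlinarith
  have hPfst : (P - q).fst = y - xc := by rw [WithLp.sub_fst]; rfl
  have hPsnd : (P - q).snd = R - ρ := by rw [WithLp.sub_snd]; rfl
  have hPnorm : ‖P - q‖ ≤ (1 + c) * ‖y - xc‖ := by
    refine le_trans (wlp_norm_le _) ?_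
    rw [hPfst, hPsnd, Real.norm_eq_abs]
    nlinarith
  have hPdist : dist P q < δ := by
    rw [dist_eq_norm]
    have h1 : ‖y - xc‖ < δ / (1 + c) := by rwa [← dist_eq_norm]
    calc ‖P - q‖ ≤ (1 + c) * ‖y - xc‖ := hPnorm
      _ < (1 + c) * (δ / (1 + c)) := by nlinarith
      _ = δ := by field_simp
  have hineq := hδ hPdist
  rw [hindq] at hineq
  have hindP : erealIndicator Q P = ((0 : ℝ) : EReal) := by simp [erealIndicator, hPQ]
  rw [hindP] at hineq
  have hinner : (inner ℝ ((WithLp.equiv 2 (H × ℝ)).symm (v, -1)) (P - q) : ℝ)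
      = A + (-1) * (R - ρ) := by
    rw [wlp_inner_eq, hPfst, hPsnd, hAdef]
  have hreal : (inner ℝ ((WithLp.equiv 2 (H × ℝ)).symm (v, -1)) (P - q) : ℝ)
      - (ε / (2 * (1 + c))) * ‖P - q‖ ≤ 0 := by
    have h2 : ((0:ℝ) : EReal) + ((((inner ℝ ((WithLp.equiv 2 (H × ℝ)).symm (v, -1)) (P - q) : ℝ))
        - (ε / (2 * (1 + c))) * ‖P - q‖ : ℝ) : EReal) ≤ (((0:ℝ)) : EReal) := hineq
    have h3 : (0:ℝ) + ((inner ℝ ((WithLp.equiv 2 (H × ℝ)).symm (v, -1)) (P - q) : ℝ)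
        - (ε / (2 * (1 + c))) * ‖P - q‖) ≤ (0:ℝ) := by exact_mod_cast h2
    linarith
  rw [hinner] at hreal
  have hPn2 : (ε / (2 * (1 + c))) * ‖P - q‖ ≤ (ε / 2) * ‖y - xc‖ := by
    have h1 : (ε / (2 * (1 + c))) * ‖P - q‖ ≤ (ε / (2 * (1 + c))) * ((1 + c) * ‖y - xc‖) :=
      mul_le_mul_of_nonneg_left hPnorm (le_of_lt hε')
    have h2 : (ε / (2 * (1 + c))) * ((1 + c) * ‖y - xc‖) = (ε / 2) * ‖y - xc‖ := by
      field_simp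
    linarith
  nlinarith

end RegLemmas2
section RegLemmas3
set_option linter.unusedSectionVars false
variable {H : Type*} [NormedAddCommGroup H] [InnerProductSpace ℝ H]

theorem reg_subset (f : H → EReal) (hbot : ∀ y, f y ≠ ⊥) (xc : H)
    (hreg : SubdiffRegularAt f xc) : limitingSubdiff f xc ⊆ frechetSubdiff f xc := by
  obtain ⟨⟨ρ, hρ⟩, hcl⟩ := hreg
  have htr : (f xc).toReal = ρ := by rw [hρ]; exact EReal.toReal_coe ρ
  rw [htr] at hcl
  intro v hv
  have h1 := limiting_to_cone f xc ρ hρ v hv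
  rw [hcl.2.2] at h1
  exact cone_to_frechet f hbot xc ρ hρ v h1

/-- Pointwise chain rule. -/
theorem chain_pt (f : H → EReal) (t : ℝ) (x : ℝ → H) (x' : H) (d : ℝ)
    (hx : HasDerivAt x x' t) (hd : HasDerivAt (fun τ => (f (x τ)).toReal) d t)
    (hfin : ∀ᶠ s in 𝓝 t, ∃ r : ℝ, f (x s) = (r : EReal))
    (v : H) (hv : v ∈ frechetSubdiff f (x t)) : d = (inner ℝ v x' : ℝ) := by
  obtain ⟨⟨ρ, hρ⟩, hsub⟩ := hv
  set g : ℝ → ℝ := fun τ => (f (x τ)).toReal with hgdef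
  have hgt : g t = ρ := by rw [hgdef]; simp [hρ]
  -- main estimate for each ε
  have key : ∀ ε : ℝ, 0 < ε → |d - (inner ℝ v x' : ℝ)| ≤ ε * ‖x'‖ := by
    intro ε hε
    -- eventual inequality along the curve
    have hev : ∀ᶠ s in 𝓝 t, g t + ((inner ℝ v (x s - x t) : ℝ)) - ε * ‖x s - x t‖ ≤ g s := by
      have hc : ContinuousAt x t := hx.continuousAt
      filter_upwards [hc.eventually (hsub ε hε), hfin] with s hs hr
      obtain ⟨r, hr⟩ := hr
      rw [hρ, hr] at hs
      rw [hgt]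
      have hgs : g s = r := by rw [hgdef]; simp [hr]
      rw [hgs]
      have : ((ρ + ((inner ℝ v (x s - x t) : ℝ) - ε * ‖x s - x t‖) : ℝ) : EReal) ≤ (r : EReal) := by
        rw [EReal.coe_add]; exact hs
      have := EReal.coe_le_coe_iff.mp this
      linarith
    -- slopes
    have hslope_g : Tendsto (slope g t) (𝓝[≠] t) (𝓝 d) := hasDerivAt_iff_tendsto_slope.mp hd
    have hslope_x : Tendsto (slope x t) (𝓝[≠] t) (𝓝 x') := hasDerivAt_iff_tendsto_slope.mp hx
    have hinner_t : Tendsto (fun s => (inner ℝ v (slope x t s) : ℝ)) (𝓝[≠] t) (𝓝 (inner ℝ v x')) :=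
      ((innerSL ℝ v).continuous.tendsto x').comp hslope_x
    have hnorm_t : Tendsto (fun s => ‖slope x t s‖) (𝓝[≠] t) (𝓝 ‖x'‖) :=
      (continuous_norm.tendsto x').comp hslope_x
    -- right side
    have hright : d - (inner ℝ v x' : ℝ) + ε * ‖x'‖ ≥ 0 := by
      have hT : Tendsto (fun s => slope g t s - (inner ℝ v (slope x t s) : ℝ) + ε * ‖slope x t s‖)
          (𝓝[>] t) (𝓝 (d - (inner ℝ v x' : ℝ) + ε * ‖x'‖)) := by
        refine Tendsto.mono_left ?_ (nhdsWithin_mono t fun s (hs : t < s) => (ne_of_gt hs : s ≠ t))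
        exact (hslope_g.sub hinner_t).add (hnorm_t.const_mul ε)
      refine ge_of_tendsto hT ?_
      have hmem : Ioi t ∈ 𝓝[>] t := self_mem_nhdsWithin
      filter_upwards [hmem, eventually_nhdsWithin_of_eventually_nhds hev] with s hs hineq
      have hst : (0:ℝ) < s - t := by simpa [sub_pos] using hs
      have hsl : slope g t s = (s - t)⁻¹ * (g s - g t) := by
        rw [slope_def_field]; ring
      have hxs : slope x t s = (s - t)⁻¹ • (x s - x t) := by rw [slope_def_module]
      rw [hsl, hxs]
      rw [inner_smul_right, norm_smul]
      have hst' : ‖(s - t)⁻¹‖ = (s - t)⁻¹ := by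
        rw [Real.norm_eq_abs, abs_of_pos (inv_pos.mpr hst)]
      rw [hst']
      have h1 : g s - g t ≥ (inner ℝ v (x s - x t) : ℝ) - ε * ‖x s - x t‖ := by linarith
      have h2 : (0:ℝ) ≤ (s - t)⁻¹ := le_of_lt (inv_pos.mpr hst)
      nlinarith [mul_le_mul_of_nonneg_left h1 h2]
    -- left side
    have hleft : d - (inner ℝ v x' : ℝ) - ε * ‖x'‖ ≤ 0 := by
      have hT : Tendsto (fun s => slope g t s - (inner ℝ v (slope x t s) : ℝ) - ε * ‖slope x t s‖)
          (𝓝[<] t) (𝓝 (d - (inner ℝ v x' : ℝ) - ε * ‖x'‖)) := by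
        refine Tendsto.mono_left ?_ (nhdsWithin_mono t fun s (hs : s < t) => (ne_of_lt hs : s ≠ t))
        exact (hslope_g.sub hinner_t).sub (hnorm_t.const_mul ε)
      refine le_of_tendsto hT ?_
      have hmem : Iio t ∈ 𝓝[<] t := self_mem_nhdsWithin
      filter_upwards [hmem, eventually_nhdsWithin_of_eventually_nhds hev] with s hs hineq
      have hst : s - t < (0:ℝ) := by simpa [sub_neg] using hs
      have hsl : slope g t s = (s - t)⁻¹ * (g s - g t) := by
        rw [slope_def_field]; ring
      have hxs : slope x t s = (s - t)⁻¹ • (x s - x t) := by rw [slope_def_module]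
      rw [hsl, hxs]
      rw [inner_smul_right, norm_smul]
      have hst' : ‖(s - t)⁻¹‖ = -(s - t)⁻¹ := by
        rw [Real.norm_eq_abs, abs_of_neg (inv_neg''.mpr hst)]
      rw [hst']
      have h1 : g s - g t ≥ (inner ℝ v (x s - x t) : ℝ) - ε * ‖x s - x t‖ := by linarith
      have h2 : (s - t)⁻¹ ≤ (0:ℝ) := le_of_lt (inv_neg''.mpr hst)
      nlinarith [mul_le_mul_of_nonpos_left h1 h2]
    rw [abs_le]
    constructor <;> linarith
  -- conclude
  by_contra hne
  have habs : (0:ℝ) < |d - (inner ℝ v x' : ℝ)| := by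
    rw [abs_pos]; intro h; exact hne (by linarith)
  have := key (|d - (inner ℝ v x' : ℝ)| / (2 * (‖x'‖ + 1))) (by positivity)
  have hb : |d - (inner ℝ v x' : ℝ)| / (2 * (‖x'‖ + 1)) * ‖x'‖ < |d - (inner ℝ v x' : ℝ)| := by
    rw [div_mul_eq_mul_div, div_lt_iff₀ (by positivity)]
    nlinarith [norm_nonneg x', habs]
  linarith

end RegLemmas3
section DiffLemmas
set_option linter.unusedSectionVars false

/-- An antitone-on-`Ioc` function is differentiable a.e. on `Ioo a b`. -/
theorem anti_ae_diff (g : ℝ → ℝ) (a b : ℝ) (hg : AntitoneOn g (Ioc a b)) :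
    ∀ᵐ t, t ∈ Ioo a b → DifferentiableAt ℝ g t := by
  rcases le_or_gt b a with hba | hab
  · filter_upwards with t ht
    exact absurd (ht.1.trans ht.2) (not_lt.mpr hba)
  set c : ℕ → ℝ := fun k => a + (b - a) / (k + 2) with hcdef
  have hc_mem : ∀ k, c k ∈ Ioc a b := by
    intro k
    constructor
    · have : (0:ℝ) < (b - a) / (k + 2) := div_pos (sub_pos.mpr hab) (by positivity)
      simp only [hcdef]; linarith
    · have h1 : (b - a) / ((k:ℝ) + 2) ≤ (b - a) := by
        rw [div_le_iff₀ (by positivity)]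
        nlinarith [sub_pos.mpr hab]
      simp only [hcdef]; linarith
  set G : ℕ → ℝ → ℝ := fun k t => -(g (max (c k) (min b t))) with hGdef
  have hclamp_mem : ∀ k t, max (c k) (min b t) ∈ Ioc a b := by
    intro k t
    constructor
    · exact lt_of_lt_of_le (hc_mem k).1 (le_max_left _ _)
    · exact max_le (hc_mem k).2 (min_le_left _ _)
  have hGmono : ∀ k, Monotone (G k) := by
    intro k s t hst
    simp only [hGdef, neg_le_neg_iff]
    refine hg (hclamp_mem k s) (hclamp_mem k t) ?_
    exact max_le_max le_rfl (min_le_min le_rfl hst)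
  have hae : ∀ᵐ t, ∀ k, DifferentiableAt ℝ (G k) t :=
    ae_all_iff.mpr fun k => (hGmono k).ae_differentiableAt
  filter_upwards [hae] with t ht hIoo
  obtain ⟨k, hk⟩ : ∃ k : ℕ, c k < t := by
    obtain ⟨k, hk⟩ := exists_nat_gt ((b - a) / (t - a))
    refine ⟨k, ?_⟩
    have h1 : (b - a) / ((k:ℝ) + 2) < t - a := by
      rw [div_lt_iff₀ (by positivity)]
      have h2 : (b - a) / (t - a) < (k:ℝ) + 2 := by
        have : (0:ℝ) ≤ k := Nat.cast_nonneg k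
        linarith
      rw [div_lt_iff₀ (sub_pos.mpr hIoo.1)] at h2
      linarith [h2]
    simp only [hcdef]; linarith
  have heq : g =ᶠ[𝓝 t] fun s => -(G k s) := by
    filter_upwards [Ioo_mem_nhds (show c k < t from hk) hIoo.2] with s hs
    have h1 : max (c k) (min b s) = s := by
      rw [min_eq_right (le_of_lt hs.2), max_eq_right (le_of_lt hs.1)]
    simp only [hGdef, neg_neg, h1]
  rw [Filter.EventuallyEq.differentiableAt_iff heq]
  exact ((ht k).neg)

/-- An absolutely continuous curve into a Euclidean space is differentiable
a.e. on `Ioo a b`. -/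
theorem ac_ae_diff {n : ℕ} (x : ℝ → EuclideanSpace ℝ (Fin n)) (a b : ℝ)
    (hAC : AbsContOn x a b) :
    ∀ᵐ t, t ∈ Ioo a b → ∃ x', HasDerivAt x x' t := by
  rcases le_or_gt b a with hba | hab
  · filter_upwards with t ht
    exact absurd (ht.1.trans ht.2) (not_lt.mpr hba)
  obtain ⟨m, hm, hbd⟩ := hAC
  set proj : ℝ → ℝ := fun t => max a (min b t) with hprojdef
  have hproj_mem : ∀ t, proj t ∈ Icc a b :=
    fun t => ⟨le_max_left _ _, max_le (le_of_lt hab) (min_le_left _ _)⟩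
  have hproj_mono : Monotone proj :=
    fun s t hst => max_le_max le_rfl (min_le_min le_rfl hst)
  have hint : ∀ u v : ℝ, u ∈ Icc a b → v ∈ Icc a b → IntervalIntegrable m volume u v :=
    fun u v hu hv => (hm.mono_set (uIcc_subset_Icc hu hv)).intervalIntegrable
  set M : ℝ → ℝ := fun t => ∫ τ in a..proj t, m τ with hMdef
  have hMdelta : ∀ s t : ℝ, s ≤ t → M t - M s = ∫ τ in proj s..proj t, m τ := by
    intro s t hst
    have h1 := intervalIntegral.integral_add_adjacent_intervals
      (hint a (proj s) (left_mem_Icc.mpr (le_of_lt hab)) (hproj_mem s))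
      (hint (proj s) (proj t) (hproj_mem s) (hproj_mem t))
    simp only [hMdef]
    linarith [h1]
  have hMkey : ∀ s t : ℝ, s ≤ t → dist (x (proj s)) (x (proj t)) ≤ M t - M s := by
    intro s t hst
    rw [hMdelta s t hst]
    exact hbd (proj s) (proj t) (hproj_mem s).1 (hproj_mono hst) (hproj_mem t).2
  have hMmono : Monotone M := by
    intro s t hst
    have := hMkey s t hst
    have h0 := dist_nonneg (x := x (proj s)) (y := x (proj t))
    linarith
  set g : Fin n → ℝ → ℝ := fun j t => x (proj t) j with hgdef
  have hgM : ∀ j, Monotone (fun t => M t + g j t) := by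
    intro j s t hst
    have h1 := hMkey s t hst
    have h2 : |g j t - g j s| ≤ dist (x (proj s)) (x (proj t)) := by
      rw [dist_eq_norm]
      have h3 : g j t - g j s = -((x (proj s) - x (proj t)) j) := by
        simp [hgdef, PiLp.sub_apply]
      rw [h3, abs_neg]
      have h4 := norm_inner_le_norm (𝕜 := ℝ)
        (EuclideanSpace.single j (1:ℝ)) (x (proj s) - x (proj t))
      simpa [EuclideanSpace.inner_single_left, EuclideanSpace.norm_single] using h4
    have := abs_le.mp h2
    simp only []
    linarith [this.1]
  have haeM : ∀ᵐ t, DifferentiableAt ℝ M t := hMmono.ae_differentiableAt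
  have haeg : ∀ᵐ t, ∀ j, DifferentiableAt ℝ (fun t => M t + g j t) t :=
    ae_all_iff.mpr fun j => (hgM j).ae_differentiableAt
  filter_upwards [haeM, haeg] with t htM htg hIoo
  have hgd : ∀ j, DifferentiableAt ℝ (g j) t := by
    intro j
    have h1 := (htg j).sub htM
    have h2 : (fun s => M s + g j s - M s) = g j := by funext s; ring
    rw [← h2]; exact h1
  -- the curve clamped to [a,b]
  set u : ℝ → (Fin n → ℝ) := fun s => fun j => g j s with hudef
  have hu : HasDerivAt u (fun j => deriv (g j) t) t :=
    hasDerivAt_pi.mpr fun j => (hgd j).hasDerivAt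
  set L := (EuclideanSpace.equiv (Fin n) ℝ).symm with hLdef
  have hXd : HasDerivAt (fun s => L (u s)) (L (fun j => deriv (g j) t)) t :=
    (L.toContinuousLinearEquiv.toContinuousLinearMap.hasFDerivAt).comp_hasDerivAt t hu
  refine ⟨L (fun j => deriv (g j) t), ?_⟩
  refine hXd.congr_of_eventuallyEq ?_
  filter_upwards [Ioo_mem_nhds hIoo.1 hIoo.2] with s hs
  have h1 : proj s = s := by
    simp only [hprojdef]
    rw [min_eq_right (le_of_lt hs.2), max_eq_right (le_of_lt hs.1)]
  show x s = L (u s)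
  have h2 : L (u s) = x (proj s) := rfl
  rw [h2, h1]

end DiffLemmas
/-- Chain rule under subdifferential regularity. -/
theorem statement12 {n : ℕ} (f : EuclideanSpace ℝ (Fin n) → EReal)
    (hreg : ∀ x : EuclideanSpace ℝ (Fin n), f x ≠ ⊤ → SubdiffRegularAt f x) :
    LimitingSlopeChainRule f := by
  intro a b x hAC hAnti hae
  -- f never takes the value ⊥
  have hbot : ∀ y, f y ≠ ⊥ := by
    intro y hy
    obtain ⟨⟨r, hr⟩, -⟩ := hreg y (by rw [hy]; exact bot_ne_top)
    rw [hy] at hr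
    exact (EReal.bot_ne_coe r) hr
  rcases le_or_gt b a with hba | hab
  · -- degenerate interval: the restricted measure is zero
    have h0 : volume (Icc a b) = 0 := by
      refine measure_mono_null (fun t ht => ?_) (Real.volume_singleton (a := a))
      have h1 : t = a := le_antisymm (ht.2.trans hba) ht.1
      simp [h1]
    have hz : volume.restrict (Icc a b) = 0 := by
      rw [Measure.restrict_eq_zero]; exact h0
    rw [hz]
    simp
  -- f (x t) is finite on (a, b]
  have hfin_top : ∀ t ∈ Ioc a b, f (x t) ≠ ⊤ := by
    intro t0 ht0 htop
    have hsub : Icc a t0 ⊆ {t | ¬ (limitingSubdiff f (x t)).Nonempty} := by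
      intro s hs
      have h1 : f (x s) = ⊤ := by
        have h2 : f (x t0) ≤ f (x s) :=
          hAnti ⟨hs.1, hs.2.trans ht0.2⟩ ⟨le_of_lt ht0.1, ht0.2⟩ hs.2
        rw [htop] at h2
        exact top_le_iff.mp h2
      rintro ⟨v, ⟨r, hr⟩, -⟩
      rw [h1] at hr
      exact (EReal.top_ne_coe r) hr
    rw [ae_iff] at hae
    have h3 : volume.restrict (Icc a b) (Icc a t0) = 0 := measure_mono_null hsub hae
    rw [Measure.restrict_apply measurableSet_Icc,
      inter_eq_self_of_subset_left (Icc_subset_Icc le_rfl ht0.2)] at h3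
    rw [Real.volume_Icc] at h3
    rw [ENNReal.ofReal_eq_zero] at h3
    linarith [ht0.1]
  -- antitone real function
  have hganti : AntitoneOn (fun t => (f (x t)).toReal) (Ioc a b) := by
    intro s hs t ht hst
    have h2 : f (x t) ≤ f (x s) :=
      hAnti (Ioc_subset_Icc_self hs) (Ioc_subset_Icc_self ht) hst
    exact EReal.toReal_le_toReal h2 (hbot _) (hfin_top s hs)
  have hgd := anti_ae_diff _ a b hganti
  have hxd := ac_ae_diff x a b hAC
  -- a.e. points of the restricted measure lie in the open interval
  have hIoo : ∀ᵐ t ∂(volume.restrict (Icc a b)), t ∈ Ioo a b := by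
    have h2 : ∀ᵐ t ∂(volume.restrict (Icc a b)), t ∈ Icc a b :=
      ae_restrict_mem measurableSet_Icc
    have h3 : ∀ᵐ t ∂(volume), t ∉ ({a, b} : Set ℝ) := by
      rw [ae_iff]
      have h0ab : volume ({a, b} : Set ℝ) = 0 := by
        refine le_antisymm (le_trans (measure_union_le {a} {b}) ?_) zero_le
        simp [Real.volume_singleton]
      exact measure_mono_null (fun t ht => not_not.mp ht) h0ab
    filter_upwards [h2, ae_restrict_of_ae h3] with t ht hne
    rcases ht with ⟨h4, h5⟩
    constructor
    · rcases lt_or_eq_of_le h4 with h | h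
      · exact h
      · exact absurd (by rw [← h]; exact mem_insert a {b}) hne
    · rcases lt_or_eq_of_le h5 with h | h
      · exact h
      · exact absurd (by rw [h]; exact mem_insert_of_mem a rfl) hne
  filter_upwards [hIoo, ae_restrict_of_ae hgd, ae_restrict_of_ae hxd] with t hIo hg hx'
  obtain ⟨x', hx'⟩ := hx' hIo
  have hgder : HasDerivAt (fun τ => (f (x τ)).toReal)
      (deriv (fun τ => (f (x τ)).toReal) t) t := (hg hIo).hasDerivAt
  refine ⟨deriv (fun τ => (f (x τ)).toReal) t, x', hgder, hx', ?_⟩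
  intro v hv
  have hfe : ∀ᶠ s in 𝓝 t, ∃ r : ℝ, f (x s) = (r : EReal) := by
    filter_upwards [Ioo_mem_nhds hIo.1 hIo.2] with s hs
    exact ⟨(f (x s)).toReal,
      (EReal.coe_toReal (hfin_top s (Ioo_subset_Ioc_self hs)) (hbot _)).symm⟩
  have hsubs := reg_subset f hbot (x t)
    (hreg (x t) (hfin_top t (Ioo_subset_Ioc_self hIo)))
  exact chain_pt f t x x' _ hx' hgder hfe v (hsubs hv)
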